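/- Let θ ∈ (0,1) ∪ (1,2) be a real number and define s_θ(x) = ⌈(x/2)^{1/θ}⌉ if 0 < θ < 1 and s_θ(x) = ⌊(x/2)^{1/θ}⌋ if 1 < θ < 2. There exist constants N > 0 and C > 0 (depending only on θ) such that for all real x ≥ N there is a unique real number t ∈ [0, s_θ(x)] satisfying (s_θ(x) + t)^θ + (s_θ(x) − t)^θ = x, and moreover this t satisfies t ≤ C · x^{1/(2θ)}. -/
import Mathlib

/-- `sTheta θ x` : ⌈(x/2)^{1/θ}⌉ if θ < 1 and ⌊(x/2)^{1/θ}⌋ otherwise. -/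
noncomputable def sTheta (θ x : ℝ) : ℤ :=
  if θ < 1 then ⌈(x / 2) ^ θ⁻¹⌉ else ⌊(x / 2) ^ θ⁻¹⌋

open Real Set

set_option maxHeartbeats 1000000

private lemma masterLe {a b p m : ℝ} (ha : 0 < a) (hab : a ≤ b)
    (h : ∀ r ∈ Set.Icc a b, p * r ^ (p - 1) ≤ m) :
    b ^ p - a ^ p ≤ m * (b - a) := by
  have key : MonotoneOn (fun r => m * r - r ^ p) (Set.Icc a b) := by
    have hd : ∀ r ∈ Set.Icc a b, HasDerivAt (fun r : ℝ => m * r - r ^ p)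
        (m - p * r ^ (p - 1)) r := by
      intro r hr
      have hr0 : r ≠ 0 := (lt_of_lt_of_le ha hr.1).ne'
      have h1 : HasDerivAt (fun r : ℝ => m * r) m r := by
        simpa using (hasDerivAt_id r).const_mul m
      exact h1.sub (Real.hasDerivAt_rpow_const (Or.inl hr0))
    apply monotoneOn_of_deriv_nonneg (convex_Icc a b)
    · exact fun r hr => (hd r hr).continuousAt.continuousWithinAt
    · intro r hr
      rw [interior_Icc] at hr
      exact ((hd r (Ioo_subset_Icc_self hr)).differentiableAt).differentiableWithinAt
    · intro r hr
      rw [interior_Icc] at hr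
      rw [(hd r (Ioo_subset_Icc_self hr)).deriv]
      have := h r (Ioo_subset_Icc_self hr)
      linarith
  have := key (Set.left_mem_Icc.2 hab) (Set.right_mem_Icc.2 hab) hab
  simp only at this
  linarith

private lemma masterGe {a b p m : ℝ} (ha : 0 < a) (hab : a ≤ b)
    (h : ∀ r ∈ Set.Icc a b, m ≤ p * r ^ (p - 1)) :
    m * (b - a) ≤ b ^ p - a ^ p := by
  have key : MonotoneOn (fun r => r ^ p - m * r) (Set.Icc a b) := by
    have hd : ∀ r ∈ Set.Icc a b, HasDerivAt (fun r : ℝ => r ^ p - m * r)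
        (p * r ^ (p - 1) - m) r := by
      intro r hr
      have hr0 : r ≠ 0 := (lt_of_lt_of_le ha hr.1).ne'
      have h1 : HasDerivAt (fun r : ℝ => m * r) m r := by
        simpa using (hasDerivAt_id r).const_mul m
      exact (Real.hasDerivAt_rpow_const (Or.inl hr0)).sub h1
    apply monotoneOn_of_deriv_nonneg (convex_Icc a b)
    · exact fun r hr => (hd r hr).continuousAt.continuousWithinAt
    · intro r hr
      rw [interior_Icc] at hr
      exact ((hd r (Ioo_subset_Icc_self hr)).differentiableAt).differentiableWithinAt
    · intro r hr
      rw [interior_Icc] at hr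
      rw [(hd r (Ioo_subset_Icc_self hr)).deriv]
      have := h r (Ioo_subset_Icc_self hr)
      linarith
  have := key (Set.left_mem_Icc.2 hab) (Set.right_mem_Icc.2 hab) hab
  simp only at this
  linarith

private lemma case_gt (θ : ℝ) (hθ1 : 1 < θ) (hθ2 : θ < 2) :
    ∃ N C : ℝ, 0 < N ∧ 0 < C ∧ ∀ x : ℝ, N ≤ x →
      ∀ S : ℝ, S = ((⌊(x / 2) ^ θ⁻¹⌋ : ℤ) : ℝ) →
      (∃! t : ℝ, t ∈ Set.Icc (0 : ℝ) S ∧ (S + t) ^ θ + (S - t) ^ θ = x) ∧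
      (∀ t : ℝ, t ∈ Set.Icc (0 : ℝ) S → (S + t) ^ θ + (S - t) ^ θ = x →
          t ≤ (2 + 2 / (θ - 1)) * x ^ (1 / (2 * θ))) := by
  have hθ0 : (0:ℝ) < θ := by linarith
  have hθne : θ ≠ 0 := ne_of_gt hθ0
  have hd : (0:ℝ) < θ - 1 := by linarith
  have h2p : (2:ℝ) ^ θ⁻¹ < 2 := by
    nth_rewrite 2 [← Real.rpow_one 2]
    exact Real.rpow_lt_rpow_of_exponent_lt one_lt_two (inv_lt_one_of_one_lt₀ hθ1)
  have h2ppos : (0:ℝ) < 2 ^ θ⁻¹ := Real.rpow_pos_of_pos two_pos _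
  have hd2 : (0:ℝ) < 2 - 2 ^ θ⁻¹ := by linarith
  set Y : ℝ := 2 + 2 / (2 - 2 ^ θ⁻¹) with hYdef
  have hY2 : 2 < Y := by
    have h : (0:ℝ) < 2 / (2 - 2 ^ θ⁻¹) := by positivity
    rw [hYdef]; linarith only [h]
  have hY0 : 0 < Y := by linarith only [hY2]
  have hYθ : 0 < Y ^ θ := Real.rpow_pos_of_pos hY0 _
  have hC0 : (0:ℝ) < 2 + 2 / (θ - 1) := by
    have h : 0 < 2 / (θ - 1) := by positivity
    linarith only [h]
  refine ⟨2 * Y ^ θ, 2 + 2 / (θ - 1), by linarith only [hYθ], hC0, ?_⟩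
  intro x hx S hSdef
  have hx0 : 0 < x := by linarith only [hx, hYθ]
  set y : ℝ := (x / 2) ^ θ⁻¹ with hydef
  have hy0 : 0 < y := Real.rpow_pos_of_pos (by linarith only [hx0]) _
  have hYy : Y ≤ y := by
    have h1 : (Y ^ θ : ℝ) ≤ x / 2 := by linarith only [hx]
    calc Y = (Y ^ θ) ^ θ⁻¹ := by
            rw [← Real.rpow_mul hY0.le, mul_inv_cancel₀ hθne, Real.rpow_one]
      _ ≤ (x / 2) ^ θ⁻¹ := Real.rpow_le_rpow (by positivity) h1 (by positivity)
  have hYy' : 2 + 2 / (2 - 2 ^ θ⁻¹) ≤ y := by rw [← hYdef]; exact hYy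
  have hSy : S ≤ y := by rw [hSdef]; exact Int.floor_le y
  have hyS1 : y < S + 1 := by rw [hSdef]; exact Int.lt_floor_add_one y
  have hy2 : 2 < y := lt_of_lt_of_le hY2 hYy
  have hS1 : 1 < S := by linarith only [hy2, hyS1]
  have hS0 : 0 < S := by linarith only [hS1]
  have hy2S : y ≤ 2 * S := by linarith only [hyS1, hS1]
  have hx2 : x = 2 * y ^ θ := by
    have h : y ^ θ = x / 2 := by
      rw [hydef, ← Real.rpow_mul (by linarith only [hx0] : (0:ℝ) ≤ x / 2),
        inv_mul_cancel₀ hθne, Real.rpow_one]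
    linarith only [h]
  set g : ℝ → ℝ := fun t => (S + t) ^ θ + (S - t) ^ θ with hgdef
  have hgc : Continuous g := by
    apply Continuous.add
    · exact (continuous_const.add continuous_id).rpow_const fun t => Or.inr hθ0.le
    · exact (continuous_const.sub continuous_id).rpow_const fun t => Or.inr hθ0.le
  have hg0 : g 0 = 2 * S ^ θ := by simp [hgdef, two_mul]
  have hgS : g S = (2 * S) ^ θ := by
    simp [hgdef, Real.zero_rpow hθne, two_mul]
  have hderiv : ∀ t ∈ Set.Ioo (0:ℝ) S,
      HasDerivAt g (θ * (S + t) ^ (θ - 1) - θ * (S - t) ^ (θ - 1)) t := by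
    intro t ht
    have hp : (0:ℝ) < S + t := by linarith only [ht.1, hS0]
    have hm : (0:ℝ) < S - t := by linarith only [ht.2]
    have h1 : HasDerivAt (fun t : ℝ => S + t) 1 t := by
      simpa using (hasDerivAt_id t).const_add S
    have h2 : HasDerivAt (fun t : ℝ => S - t) (-1) t := by
      simpa using (hasDerivAt_id t).const_sub S
    have h3 : HasDerivAt g (1 * θ * (S + t) ^ (θ - 1) + -1 * θ * (S - t) ^ (θ - 1)) t :=
      (h1.rpow_const (p := θ) (Or.inl hp.ne')).add (h2.rpow_const (p := θ) (Or.inl hm.ne'))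
    convert h3 using 1
    ring
  have hmono : StrictMonoOn g (Set.Icc 0 S) := by
    apply strictMonoOn_of_deriv_pos (convex_Icc 0 S) hgc.continuousOn
    intro t ht
    rw [interior_Icc] at ht
    rw [(hderiv t ht).deriv]
    have hlt : (S - t) ^ (θ - 1) < (S + t) ^ (θ - 1) :=
      Real.rpow_lt_rpow (by linarith only [ht.2]) (by linarith only [ht.1]) hd
    have h4 := mul_lt_mul_of_pos_left hlt hθ0
    linarith only [h4]
  have hend0 : g 0 ≤ x := by
    rw [hg0, hx2]
    have h5 := Real.rpow_le_rpow hS0.le hSy hθ0.le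
    linarith only [h5]
  have hendS : x ≤ g S := by
    rw [hgS, hx2]
    have h1 : 2 ≤ y * (2 - 2 ^ θ⁻¹) := by
      have h' : 2 / (2 - 2 ^ θ⁻¹) ≤ y := by linarith only [hYy']
      calc (2:ℝ) = (2 / (2 - 2 ^ θ⁻¹)) * (2 - 2 ^ θ⁻¹) := (div_mul_cancel₀ 2 hd2.ne').symm
        _ ≤ y * (2 - 2 ^ θ⁻¹) := mul_le_mul_of_nonneg_right h' hd2.le
    have h2 : 2 ^ θ⁻¹ * y ≤ 2 * S := by
      have hexp : 2 ^ θ⁻¹ * y = 2 * y - y * (2 - 2 ^ θ⁻¹) := by ring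
      rw [hexp]
      linarith only [h1, hyS1, hS1]
    have h3 : (2 ^ θ⁻¹ * y) ^ θ ≤ (2 * S) ^ θ :=
      Real.rpow_le_rpow (by positivity) h2 hθ0.le
    have h4 : (2 ^ θ⁻¹ * y) ^ θ = 2 * y ^ θ := by
      rw [Real.mul_rpow h2ppos.le hy0.le, ← Real.rpow_mul (by norm_num : (0:ℝ) ≤ 2),
        inv_mul_cancel₀ hθne, Real.rpow_one]
    linarith only [h3, h4]
  obtain ⟨t₀, ht₀mem, hgt₀⟩ := intermediate_value_Icc hS0.le hgc.continuousOn ⟨hend0, hendS⟩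
  constructor
  · refine ⟨t₀, ⟨ht₀mem, hgt₀⟩, ?_⟩
    rintro t' ⟨ht'mem, hgt'⟩
    exact hmono.injOn ht'mem ht₀mem (hgt'.trans hgt₀.symm)
  -- the bound
  intro t ht hgt
  rcases eq_or_lt_of_le ht.1 with h0 | h0
  · rw [← h0]; positivity
  have hgt' : g t = x := hgt
  have h2S0 : (0:ℝ) < 2 * S := by linarith only [hS0]
  set P : ℝ := (2 * S) ^ (θ - 2) with hPdef
  have hP : 0 < P := Real.rpow_pos_of_pos h2S0 _
  set K : ℝ := θ * ((θ - 1) * P) with hKdef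
  -- Step A : K * t^2 ≤ x - 2 S^θ
  have hstepA : K * t ^ 2 ≤ x - 2 * S ^ θ := by
    have hmono2 : MonotoneOn (fun u => g u - K * u ^ 2) (Set.Icc 0 t) := by
      have hdu : ∀ u ∈ Set.Ioo (0:ℝ) t, HasDerivAt (fun u => g u - K * u ^ 2)
          ((θ * (S + u) ^ (θ - 1) - θ * (S - u) ^ (θ - 1)) - K * (2 * u)) u := by
        intro u hu
        have hu' : u ∈ Set.Ioo (0:ℝ) S := ⟨hu.1, lt_of_lt_of_le hu.2 ht.2⟩
        have hq : HasDerivAt (fun u : ℝ => K * u ^ 2) (K * (2 * u)) u := by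
          have := (hasDerivAt_pow 2 u).const_mul K
          simpa using this
        exact (hderiv u hu').sub hq
      apply monotoneOn_of_deriv_nonneg (convex_Icc 0 t)
      · exact (hgc.sub (continuous_const.mul (continuous_pow 2))).continuousOn
      · intro u hu
        rw [interior_Icc] at hu
        exact ((hdu u hu).differentiableAt).differentiableWithinAt
      · intro u hu
        rw [interior_Icc] at hu
        rw [(hdu u hu).deriv]
        have hu' : u ∈ Set.Ioo (0:ℝ) S := ⟨hu.1, lt_of_lt_of_le hu.2 ht.2⟩
        have hma : (0:ℝ) < S - u := by linarith only [hu'.2]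
        have hmab : S - u ≤ S + u := by linarith only [hu'.1]
        have hbound : ∀ r ∈ Set.Icc (S - u) (S + u),
            (θ - 1) * P ≤ (θ - 1) * r ^ (θ - 1 - 1) := by
          intro r hr
          have hr0 : 0 < r := lt_of_lt_of_le hma hr.1
          have hr2S : r ≤ 2 * S := by linarith only [hr.2, hu'.2]
          have hPr : P ≤ r ^ (θ - 2) :=
            Real.rpow_le_rpow_of_nonpos hr0 hr2S (by linarith only [hθ2])
          have he : θ - 1 - 1 = θ - 2 := by ring
          rw [he]
          exact mul_le_mul_of_nonneg_left hPr hd.le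
        have hmm := masterGe hma hmab hbound
        have hsum : (S + u) - (S - u) = 2 * u := by ring
        rw [hsum] at hmm
        have hmm2 := mul_le_mul_of_nonneg_left hmm hθ0.le
        rw [hKdef]
        linarith only [hmm2]
    have h01 := hmono2 (Set.left_mem_Icc.2 ht.1) (Set.right_mem_Icc.2 ht.1) ht.1
    have h01' : g 0 - K * 0 ^ 2 ≤ g t - K * t ^ 2 := h01
    rw [hg0, hgt'] at h01'
    norm_num at h01'
    linarith only [h01']
  -- Step B : x - 2 S^θ ≤ 2 θ (2S)^(θ-1)
  have hQ : (0:ℝ) < (2 * S) ^ (θ - 1) := Real.rpow_pos_of_pos h2S0 _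
  have hstepB : x - 2 * S ^ θ ≤ 2 * θ * (2 * S) ^ (θ - 1) := by
    have hbound : ∀ r ∈ Set.Icc S y, θ * r ^ (θ - 1) ≤ θ * (2 * S) ^ (θ - 1) := by
      intro r hr
      have h1 : r ^ (θ - 1) ≤ (2 * S) ^ (θ - 1) :=
        Real.rpow_le_rpow (le_trans hS0.le hr.1) (by linarith only [hr.2, hy2S]) hd.le
      exact mul_le_mul_of_nonneg_left h1 hθ0.le
    have hB := masterLe hS0 hSy hbound
    have hyS : y - S ≤ 1 := by linarith only [hyS1]
    have h5 := mul_le_mul_of_nonneg_left hyS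
      (by positivity : (0:ℝ) ≤ θ * (2*S)^(θ-1))
    rw [hx2]
    linarith only [hB, h5]
  -- combine : (θ-1) t² ≤ 4 S
  have hrw : (2 * S) ^ (θ - 1) = P * (2 * S) := by
    rw [hPdef, ← Real.rpow_add_one h2S0.ne' (θ - 2)]
    congr 1
    ring
  have h4 : (θ - 1) * t ^ 2 ≤ 4 * S := by
    rw [hrw] at hstepB
    have hKt : K * t ^ 2 ≤ 2 * θ * (P * (2 * S)) := le_trans hstepA hstepB
    rw [hKdef] at hKt
    have hKt2 : (θ * P) * ((θ - 1) * t ^ 2) ≤ (θ * P) * (4 * S) := by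
      have e1 : (θ * P) * ((θ - 1) * t ^ 2) = θ * ((θ - 1) * P) * t ^ 2 := by ring
      have e2 : (θ * P) * (4 * S) = 2 * θ * (P * (2 * S)) := by ring
      rw [e1, e2]; exact hKt
    exact le_of_mul_le_mul_left hKt2 (mul_pos hθ0 hP)
  -- finish
  have hxy : y ≤ x ^ θ⁻¹ := by
    rw [hydef]
    exact Real.rpow_le_rpow (by linarith only [hx0]) (by linarith only [hx0]) (by positivity)
  have hxinv : 0 < x ^ θ⁻¹ := Real.rpow_pos_of_pos hx0 _
  have hsq : (x ^ (1 / (2 * θ))) ^ 2 = x ^ θ⁻¹ := by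
    rw [← Real.rpow_natCast (x ^ (1 / (2 * θ))) 2, ← Real.rpow_mul hx0.le]
    congr 1
    push_cast
    field_simp
  have hR0 : 0 ≤ (2 + 2 / (θ - 1)) * x ^ (1 / (2 * θ)) := by positivity
  have hfin : t ^ 2 ≤ ((2 + 2 / (θ - 1)) * x ^ (1 / (2 * θ))) ^ 2 := by
    rw [mul_pow, hsq]
    have hCd : (2 / (θ - 1)) * (θ - 1) = 2 := div_mul_cancel₀ 2 hd.ne'
    have hu0 : 0 < 2 / (θ - 1) := by positivity
    have hSX : S ≤ x ^ θ⁻¹ := le_trans hSy hxy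
    have hX4 : (θ - 1) * t ^ 2 ≤ 4 * x ^ θ⁻¹ := by linarith only [h4, hSX]
    have hkey : 4 ≤ (θ - 1) * (2 + 2 / (θ - 1)) ^ 2 := by
      have e : (θ - 1) * (2 + 2 / (θ - 1)) ^ 2 =
          4 * (θ - 1) + 4 * ((2 / (θ - 1)) * (θ - 1)) +
            (2 / (θ - 1)) * ((2 / (θ - 1)) * (θ - 1)) := by ring
      rw [e, hCd]
      linarith only [hu0, hd]
    have hstep : (θ - 1) * t ^ 2 ≤ (θ - 1) * ((2 + 2 / (θ - 1)) ^ 2 * x ^ θ⁻¹) := by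
      have h6 : 4 * x ^ θ⁻¹ ≤ ((θ - 1) * (2 + 2 / (θ - 1)) ^ 2) * x ^ θ⁻¹ :=
        mul_le_mul_of_nonneg_right hkey hxinv.le
      have e : ((θ - 1) * (2 + 2 / (θ - 1)) ^ 2) * x ^ θ⁻¹ =
          (θ - 1) * ((2 + 2 / (θ - 1)) ^ 2 * x ^ θ⁻¹) := by ring
      rw [e] at h6
      linarith only [h6, hX4]
    exact le_of_mul_le_mul_left hstep hd
  calc t = Real.sqrt (t ^ 2) := (Real.sqrt_sq ht.1).symm
    _ ≤ Real.sqrt (((2 + 2 / (θ - 1)) * x ^ (1 / (2 * θ))) ^ 2) := Real.sqrt_le_sqrt hfin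
    _ = _ := Real.sqrt_sq hR0

private lemma case_lt (θ : ℝ) (hθ0 : 0 < θ) (hθ1 : θ < 1) :
    ∃ N C : ℝ, 0 < N ∧ 0 < C ∧ ∀ x : ℝ, N ≤ x →
      ∀ S : ℝ, S = ((⌈(x / 2) ^ θ⁻¹⌉ : ℤ) : ℝ) →
      (∃! t : ℝ, t ∈ Set.Icc (0 : ℝ) S ∧ (S + t) ^ θ + (S - t) ^ θ = x) ∧
      (∀ t : ℝ, t ∈ Set.Icc (0 : ℝ) S → (S + t) ^ θ + (S - t) ^ θ = x →
          t ≤ (4 + 4 / (1 - θ)) * x ^ (1 / (2 * θ))) := by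
  have hθne : θ ≠ 0 := ne_of_gt hθ0
  have hd : (0:ℝ) < 1 - θ := by linarith
  have hinv : (1:ℝ) < θ⁻¹ := by
    rw [← one_div, lt_div_iff₀ hθ0]; linarith
  have h2p : (2:ℝ) < 2 ^ θ⁻¹ := by
    nth_rewrite 1 [← Real.rpow_one 2]
    exact Real.rpow_lt_rpow_of_exponent_lt one_lt_two hinv
  have h2ppos : (0:ℝ) < 2 ^ θ⁻¹ := Real.rpow_pos_of_pos two_pos _
  have hd2 : (0:ℝ) < 2 ^ θ⁻¹ - 2 := by linarith
  set Y : ℝ := 2 + 2 / (2 ^ θ⁻¹ - 2) with hYdef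
  have hY2 : 2 < Y := by
    have h : (0:ℝ) < 2 / (2 ^ θ⁻¹ - 2) := by positivity
    rw [hYdef]; linarith only [h]
  have hY0 : 0 < Y := by linarith only [hY2]
  have hYθ : 0 < Y ^ θ := Real.rpow_pos_of_pos hY0 _
  have hC0 : (0:ℝ) < 4 + 4 / (1 - θ) := by
    have h : (0:ℝ) < 4 / (1 - θ) := by positivity
    linarith only [h]
  refine ⟨2 * Y ^ θ, 4 + 4 / (1 - θ), by linarith only [hYθ], hC0, ?_⟩
  intro x hx S hSdef
  have hx0 : 0 < x := by linarith only [hx, hYθ]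
  set y : ℝ := (x / 2) ^ θ⁻¹ with hydef
  have hy0 : 0 < y := Real.rpow_pos_of_pos (by linarith only [hx0]) _
  have hYy : Y ≤ y := by
    have h1 : (Y ^ θ : ℝ) ≤ x / 2 := by linarith only [hx]
    calc Y = (Y ^ θ) ^ θ⁻¹ := by
            rw [← Real.rpow_mul hY0.le, mul_inv_cancel₀ hθne, Real.rpow_one]
      _ ≤ (x / 2) ^ θ⁻¹ := Real.rpow_le_rpow (by positivity) h1 (by positivity)
  have hYy' : 2 + 2 / (2 ^ θ⁻¹ - 2) ≤ y := by rw [← hYdef]; exact hYy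
  have hSy : y ≤ S := by rw [hSdef]; exact Int.le_ceil y
  have hyS1 : S < y + 1 := by rw [hSdef]; exact Int.ceil_lt_add_one y
  have hy2 : 2 < y := lt_of_lt_of_le hY2 hYy
  have hS1 : 1 < S := by linarith only [hy2, hSy]
  have hS0 : 0 < S := by linarith only [hS1]
  have hS2y : S ≤ 2 * y := by linarith only [hyS1, hy2]
  have hx2 : x = 2 * y ^ θ := by
    have h : y ^ θ = x / 2 := by
      rw [hydef, ← Real.rpow_mul (by linarith only [hx0] : (0:ℝ) ≤ x / 2),
        inv_mul_cancel₀ hθne, Real.rpow_one]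
    linarith only [h]
  set g : ℝ → ℝ := fun t => (S + t) ^ θ + (S - t) ^ θ with hgdef
  have hgc : Continuous g := by
    apply Continuous.add
    · exact (continuous_const.add continuous_id).rpow_const fun t => Or.inr hθ0.le
    · exact (continuous_const.sub continuous_id).rpow_const fun t => Or.inr hθ0.le
  have hg0 : g 0 = 2 * S ^ θ := by simp [hgdef, two_mul]
  have hgS : g S = (2 * S) ^ θ := by
    simp [hgdef, Real.zero_rpow hθne, two_mul]
  have hderiv : ∀ t ∈ Set.Ioo (0:ℝ) S,
      HasDerivAt g (θ * (S + t) ^ (θ - 1) - θ * (S - t) ^ (θ - 1)) t := by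
    intro t ht
    have hp : (0:ℝ) < S + t := by linarith only [ht.1, hS0]
    have hm : (0:ℝ) < S - t := by linarith only [ht.2]
    have h1 : HasDerivAt (fun t : ℝ => S + t) 1 t := by
      simpa using (hasDerivAt_id t).const_add S
    have h2 : HasDerivAt (fun t : ℝ => S - t) (-1) t := by
      simpa using (hasDerivAt_id t).const_sub S
    have h3 : HasDerivAt g (1 * θ * (S + t) ^ (θ - 1) + -1 * θ * (S - t) ^ (θ - 1)) t :=
      (h1.rpow_const (p := θ) (Or.inl hp.ne')).add (h2.rpow_const (p := θ) (Or.inl hm.ne'))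
    convert h3 using 1
    ring
  have hanti : StrictAntiOn g (Set.Icc 0 S) := by
    apply strictAntiOn_of_deriv_neg (convex_Icc 0 S) hgc.continuousOn
    intro t ht
    rw [interior_Icc] at ht
    rw [(hderiv t ht).deriv]
    have hlt : (S + t) ^ (θ - 1) < (S - t) ^ (θ - 1) :=
      Real.rpow_lt_rpow_of_neg (by linarith only [ht.2]) (by linarith only [ht.1])
        (by linarith only [hθ1])
    have h4 := mul_lt_mul_of_pos_left hlt hθ0
    linarith only [h4]
  have hend0 : x ≤ g 0 := by
    rw [hg0, hx2]
    have h5 := Real.rpow_le_rpow hy0.le hSy hθ0.le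
    linarith only [h5]
  have hendS : g S ≤ x := by
    rw [hgS, hx2]
    have h1 : 2 ≤ y * (2 ^ θ⁻¹ - 2) := by
      have h' : 2 / (2 ^ θ⁻¹ - 2) ≤ y := by linarith only [hYy']
      calc (2:ℝ) = (2 / (2 ^ θ⁻¹ - 2)) * (2 ^ θ⁻¹ - 2) := (div_mul_cancel₀ 2 hd2.ne').symm
        _ ≤ y * (2 ^ θ⁻¹ - 2) := mul_le_mul_of_nonneg_right h' hd2.le
    have h2 : 2 * S ≤ 2 ^ θ⁻¹ * y := by
      have hexp : 2 ^ θ⁻¹ * y = 2 * y + y * (2 ^ θ⁻¹ - 2) := by ring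
      rw [hexp]
      linarith only [h1, hyS1]
    have h3 : (2 * S) ^ θ ≤ (2 ^ θ⁻¹ * y) ^ θ :=
      Real.rpow_le_rpow (by positivity) h2 hθ0.le
    have h4 : (2 ^ θ⁻¹ * y) ^ θ = 2 * y ^ θ := by
      rw [Real.mul_rpow h2ppos.le hy0.le, ← Real.rpow_mul (by norm_num : (0:ℝ) ≤ 2),
        inv_mul_cancel₀ hθne, Real.rpow_one]
    linarith only [h3, h4]
  obtain ⟨t₀, ht₀mem, hgt₀⟩ := intermediate_value_Icc' hS0.le hgc.continuousOn ⟨hendS, hend0⟩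
  constructor
  · refine ⟨t₀, ⟨ht₀mem, hgt₀⟩, ?_⟩
    rintro t' ⟨ht'mem, hgt'⟩
    exact hanti.injOn ht'mem ht₀mem (hgt'.trans hgt₀.symm)
  -- the bound
  intro t ht hgt
  rcases eq_or_lt_of_le ht.1 with h0 | h0
  · rw [← h0]; positivity
  have hgt' : g t = x := hgt
  have h2S0 : (0:ℝ) < 2 * S := by linarith only [hS0]
  set P : ℝ := (2 * S) ^ (θ - 2) with hPdef
  have hP : 0 < P := Real.rpow_pos_of_pos h2S0 _
  set K : ℝ := θ * ((1 - θ) * P) with hKdef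
  -- Step A : K * t^2 ≤ 2 S^θ - x
  have hstepA : K * t ^ 2 ≤ 2 * S ^ θ - x := by
    have hmono2 : MonotoneOn (fun u => -(g u) - K * u ^ 2) (Set.Icc 0 t) := by
      have hdu : ∀ u ∈ Set.Ioo (0:ℝ) t, HasDerivAt (fun u => -(g u) - K * u ^ 2)
          ((-(θ * (S + u) ^ (θ - 1) - θ * (S - u) ^ (θ - 1))) - K * (2 * u)) u := by
        intro u hu
        have hu' : u ∈ Set.Ioo (0:ℝ) S := ⟨hu.1, lt_of_lt_of_le hu.2 ht.2⟩
        have hq : HasDerivAt (fun u : ℝ => K * u ^ 2) (K * (2 * u)) u := by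
          have := (hasDerivAt_pow 2 u).const_mul K
          simpa using this
        exact ((hderiv u hu').neg).sub hq
      apply monotoneOn_of_deriv_nonneg (convex_Icc 0 t)
      · exact (hgc.neg.sub (continuous_const.mul (continuous_pow 2))).continuousOn
      · intro u hu
        rw [interior_Icc] at hu
        exact ((hdu u hu).differentiableAt).differentiableWithinAt
      · intro u hu
        rw [interior_Icc] at hu
        rw [(hdu u hu).deriv]
        have hu' : u ∈ Set.Ioo (0:ℝ) S := ⟨hu.1, lt_of_lt_of_le hu.2 ht.2⟩
        have hma : (0:ℝ) < S - u := by linarith only [hu'.2]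
        have hmab : S - u ≤ S + u := by linarith only [hu'.1]
        have hbound : ∀ r ∈ Set.Icc (S - u) (S + u),
            (θ - 1) * r ^ (θ - 1 - 1) ≤ (θ - 1) * P := by
          intro r hr
          have hr0 : 0 < r := lt_of_lt_of_le hma hr.1
          have hr2S : r ≤ 2 * S := by linarith only [hr.2, hu'.2]
          have hPr : P ≤ r ^ (θ - 2) :=
            Real.rpow_le_rpow_of_nonpos hr0 hr2S (by linarith only [hθ1])
          have he : θ - 1 - 1 = θ - 2 := by ring
          rw [he]
          exact mul_le_mul_of_nonpos_left hPr (by linarith only [hθ1])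
        have hmm := masterLe hma hmab hbound
        have hsum : (S + u) - (S - u) = 2 * u := by ring
        rw [hsum] at hmm
        have hmm2 := mul_le_mul_of_nonneg_left hmm hθ0.le
        rw [hKdef]
        linarith only [hmm2]
    have h01 := hmono2 (Set.left_mem_Icc.2 ht.1) (Set.right_mem_Icc.2 ht.1) ht.1
    have h01' : -(g 0) - K * 0 ^ 2 ≤ -(g t) - K * t ^ 2 := h01
    rw [hg0, hgt'] at h01'
    norm_num at h01'
    linarith only [h01']
  -- Step B : 2 S^θ - x ≤ 2 θ y^(θ-1)
  have hyQ : (0:ℝ) < y ^ (θ - 1) := Real.rpow_pos_of_pos hy0 _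
  have hstepB : 2 * S ^ θ - x ≤ 2 * θ * y ^ (θ - 1) := by
    have hbound : ∀ r ∈ Set.Icc y S, θ * r ^ (θ - 1) ≤ θ * y ^ (θ - 1) := by
      intro r hr
      have h1 : r ^ (θ - 1) ≤ y ^ (θ - 1) :=
        Real.rpow_le_rpow_of_nonpos hy0 hr.1 (by linarith only [hθ1])
      exact mul_le_mul_of_nonneg_left h1 hθ0.le
    have hB := masterLe hy0 hSy hbound
    have hSy1 : S - y ≤ 1 := by linarith only [hyS1]
    have h5 := mul_le_mul_of_nonneg_left hSy1
      (by positivity : (0:ℝ) ≤ θ * y ^ (θ - 1))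
    rw [hx2]
    linarith only [hB, h5]
  -- y^(θ-1) ≤ 4 (2S)^(θ-1)
  have hQ : (0:ℝ) < (2 * S) ^ (θ - 1) := Real.rpow_pos_of_pos h2S0 _
  have hy4 : y ^ (θ - 1) ≤ (2 * S) ^ (θ - 1) * 4 := by
    have hhalf : (0:ℝ) < S / 2 := by linarith only [hS0]
    have h6 : y ^ (θ - 1) ≤ (S / 2) ^ (θ - 1) :=
      Real.rpow_le_rpow_of_nonpos hhalf (by linarith only [hS2y]) (by linarith only [hθ1])
    have h7 : (S / 2 : ℝ) ^ (θ - 1) = (2 * S) ^ (θ - 1) * ((1:ℝ)/4) ^ (θ - 1) := by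
      have e : (S / 2 : ℝ) = (2 * S) * (1/4) := by ring
      rw [e, Real.mul_rpow h2S0.le (by norm_num)]
    have h8 : ((1:ℝ)/4) ^ (θ - 1) ≤ 4 := by
      have e1 : ((1:ℝ)/4) = (4:ℝ) ^ (-1 : ℝ) := by
        rw [Real.rpow_neg_one]; norm_num
      rw [e1, ← Real.rpow_mul (by norm_num : (0:ℝ) ≤ 4)]
      have e2 : (-1 : ℝ) * (θ - 1) = 1 - θ := by ring
      rw [e2]
      calc (4:ℝ) ^ (1 - θ) ≤ 4 ^ (1:ℝ) :=
            Real.rpow_le_rpow_of_exponent_le (by norm_num) (by linarith only [hθ0])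
        _ = 4 := Real.rpow_one 4
    calc y ^ (θ - 1) ≤ (S / 2) ^ (θ - 1) := h6
      _ = (2 * S) ^ (θ - 1) * ((1:ℝ)/4) ^ (θ - 1) := h7
      _ ≤ (2 * S) ^ (θ - 1) * 4 := mul_le_mul_of_nonneg_left h8 hQ.le
  -- combine : (1-θ) t² ≤ 16 S
  have hrw : (2 * S) ^ (θ - 1) = P * (2 * S) := by
    rw [hPdef, ← Real.rpow_add_one h2S0.ne' (θ - 2)]
    congr 1
    ring
  have h4 : (1 - θ) * t ^ 2 ≤ 16 * S := by
    have hy4' : 2 * θ * y ^ (θ - 1) ≤ 2 * θ * ((2 * S) ^ (θ - 1) * 4) :=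
      mul_le_mul_of_nonneg_left hy4 (by positivity)
    rw [hrw] at hy4'
    have hKt : K * t ^ 2 ≤ 2 * θ * (P * (2 * S) * 4) :=
      le_trans hstepA (le_trans hstepB hy4')
    rw [hKdef] at hKt
    have hKt2 : (θ * P) * ((1 - θ) * t ^ 2) ≤ (θ * P) * (16 * S) := by
      have e1 : (θ * P) * ((1 - θ) * t ^ 2) = θ * ((1 - θ) * P) * t ^ 2 := by ring
      have e2 : (θ * P) * (16 * S) = 2 * θ * (P * (2 * S) * 4) := by ring
      rw [e1, e2]; exact hKt
    exact le_of_mul_le_mul_left hKt2 (mul_pos hθ0 hP)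
  -- finish
  have hxy : y ≤ x ^ θ⁻¹ := by
    rw [hydef]
    exact Real.rpow_le_rpow (by linarith only [hx0]) (by linarith only [hx0]) (by positivity)
  have hxinv : 0 < x ^ θ⁻¹ := Real.rpow_pos_of_pos hx0 _
  have hsq : (x ^ (1 / (2 * θ))) ^ 2 = x ^ θ⁻¹ := by
    rw [← Real.rpow_natCast (x ^ (1 / (2 * θ))) 2, ← Real.rpow_mul hx0.le]
    congr 1
    push_cast
    field_simp
  have hR0 : 0 ≤ (4 + 4 / (1 - θ)) * x ^ (1 / (2 * θ)) := by positivity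
  have hfin : t ^ 2 ≤ ((4 + 4 / (1 - θ)) * x ^ (1 / (2 * θ))) ^ 2 := by
    rw [mul_pow, hsq]
    have hCd : (4 / (1 - θ)) * (1 - θ) = 4 := div_mul_cancel₀ 4 hd.ne'
    have hu0 : (0:ℝ) < 4 / (1 - θ) := by positivity
    have hSX : S ≤ 2 * x ^ θ⁻¹ := by linarith only [hS2y, hxy]
    have hX4 : (1 - θ) * t ^ 2 ≤ 32 * x ^ θ⁻¹ := by linarith only [h4, hSX]
    have hkey : 32 ≤ (1 - θ) * (4 + 4 / (1 - θ)) ^ 2 := by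
      have e : (1 - θ) * (4 + 4 / (1 - θ)) ^ 2 =
          16 * (1 - θ) + 8 * ((4 / (1 - θ)) * (1 - θ)) +
            (4 / (1 - θ)) * ((4 / (1 - θ)) * (1 - θ)) := by ring
      rw [e, hCd]
      linarith only [hu0, hd]
    have hstep : (1 - θ) * t ^ 2 ≤ (1 - θ) * ((4 + 4 / (1 - θ)) ^ 2 * x ^ θ⁻¹) := by
      have h6 : 32 * x ^ θ⁻¹ ≤ ((1 - θ) * (4 + 4 / (1 - θ)) ^ 2) * x ^ θ⁻¹ :=
        mul_le_mul_of_nonneg_right hkey hxinv.le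
      have e : ((1 - θ) * (4 + 4 / (1 - θ)) ^ 2) * x ^ θ⁻¹ =
          (1 - θ) * ((4 + 4 / (1 - θ)) ^ 2 * x ^ θ⁻¹) := by ring
      rw [e] at h6
      linarith only [h6, hX4]
    exact le_of_mul_le_mul_left hstep hd
  calc t = Real.sqrt (t ^ 2) := (Real.sqrt_sq ht.1).symm
    _ ≤ Real.sqrt (((4 + 4 / (1 - θ)) * x ^ (1 / (2 * θ))) ^ 2) := Real.sqrt_le_sqrt hfin
    _ = _ := Real.sqrt_sq hR0


theorem stmt_18 (θ : ℝ) (hθ : θ ∈ Set.Ioo (0 : ℝ) 1 ∪ Set.Ioo (1 : ℝ) 2) :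
    ∃ N C : ℝ, 0 < N ∧ 0 < C ∧ ∀ x : ℝ, N ≤ x →
      (∃! t : ℝ, t ∈ Set.Icc (0 : ℝ) ((sTheta θ x : ℤ) : ℝ) ∧
        (((sTheta θ x : ℤ) : ℝ) + t) ^ θ + (((sTheta θ x : ℤ) : ℝ) - t) ^ θ = x) ∧
      (∀ t : ℝ, t ∈ Set.Icc (0 : ℝ) ((sTheta θ x : ℤ) : ℝ) →
        (((sTheta θ x : ℤ) : ℝ) + t) ^ θ + (((sTheta θ x : ℤ) : ℝ) - t) ^ θ = x →
          t ≤ C * x ^ (1 / (2 * θ))) := by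
  rcases hθ with h | h
  · obtain ⟨N, C, hN, hC, hmain⟩ := case_lt θ h.1 h.2
    have hd : (0:ℝ) < 1 - θ := by linarith [h.2]
    have hC' : (0:ℝ) < 4 + 4 / (1 - θ) := by
      have := div_pos (by norm_num : (0:ℝ) < 4) hd; linarith
    refine ⟨N, 4 + 4 / (1 - θ), hN, hC', fun x hx => ?_⟩
    have hS : ((sTheta θ x : ℤ) : ℝ) = ((⌈(x / 2) ^ θ⁻¹⌉ : ℤ) : ℝ) := by
      rw [sTheta, if_pos h.2]
    rw [hS]
    exact hmain x hx _ rfl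
  · obtain ⟨N, C, hN, hC, hmain⟩ := case_gt θ h.1 h.2
    have hd : (0:ℝ) < θ - 1 := by linarith [h.1]
    have hC' : (0:ℝ) < 2 + 2 / (θ - 1) := by
      have := div_pos (by norm_num : (0:ℝ) < 2) hd; linarith
    refine ⟨N, 2 + 2 / (θ - 1), hN, hC', fun x hx => ?_⟩
    have hS : ((sTheta θ x : ℤ) : ℝ) = ((⌊(x / 2) ^ θ⁻¹⌋ : ℤ) : ℝ) := by
      rw [sTheta, if_neg (not_lt.mpr h.1.le)]
    rw [hS]
    exact hmain x hx _ rfl
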